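/- arXiv:1401.1711 — 9 statements merged into one kernel-verified Lean document; each statement's English description precedes it below -/
import Mathlib

section
/- Let K > 0 and let C : ℝ × ℝ → ℝ be a nonnegative function satisfying λ·C(P₁,P₂) ≤ C(λP₁, λP₂) for all λ ∈ (0,1) and all P₁,P₂ > 0. Then for every ε > 0, the supremum of C(P₁,P₂)/(P₁ + K·P₂) over all P₁,P₂ > 0 equals the supremum of the same quantity over all P₁,P₂ ∈ (0,ε). Hence the optimization of rate per unit energy can be restricted to an arbitrarily small neighborhood of the origin. -/
/-- The optimization of rate per unit energy can be restricted to an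
arbitrarily small neighborhood of the origin. -/
theorem rate_per_unit_energy_sup_near_origin
    (K : ℝ) (hK : 0 < K) (C : ℝ × ℝ → ℝ)
    (hC_nonneg : ∀ P₁ P₂ : ℝ, 0 < P₁ → 0 < P₂ → 0 ≤ C (P₁, P₂))
    (hC_ts : ∀ l P₁ P₂ : ℝ, 0 < l → l < 1 → 0 < P₁ → 0 < P₂ →
      l * C (P₁, P₂) ≤ C (l * P₁, l * P₂))
    (ε : ℝ) (hε : 0 < ε) :
    sSup {r : ℝ | ∃ P₁ P₂ : ℝ, 0 < P₁ ∧ 0 < P₂ ∧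
        r = C (P₁, P₂) / (P₁ + K * P₂)} =
      sSup {r : ℝ | ∃ P₁ P₂ : ℝ, 0 < P₁ ∧ P₁ < ε ∧ 0 < P₂ ∧ P₂ < ε ∧
        r = C (P₁, P₂) / (P₁ + K * P₂)} := by
  apply csSup_eq_csSup_of_forall_exists_le
  · rintro r ⟨P₁, P₂, hP₁, hP₂, rfl⟩
    set l : ℝ := min (ε / (2 * P₁)) (min (ε / (2 * P₂)) (1/2)) with hl
    have hl0 : 0 < l := by
      apply lt_min (div_pos hε (by linarith))
      exact lt_min (div_pos hε (by linarith)) (by norm_num)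
    have hl1 : l < 1 := lt_of_le_of_lt (le_trans (min_le_right _ _) (min_le_right _ _)) (by norm_num)
    have h1 : l * P₁ < ε := by
      calc l * P₁ ≤ (ε / (2 * P₁)) * P₁ := by
            exact mul_le_mul_of_nonneg_right (min_le_left _ _) hP₁.le
        _ = ε / 2 := by field_simp
        _ < ε := by linarith
    have h2 : l * P₂ < ε := by
      calc l * P₂ ≤ (ε / (2 * P₂)) * P₂ := by
            exact mul_le_mul_of_nonneg_right
              (le_trans (min_le_right _ _) (min_le_left _ _)) hP₂.le
        _ = ε / 2 := by field_simp
        _ < ε := by linarith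
    refine ⟨C (l * P₁, l * P₂) / (l * P₁ + K * (l * P₂)),
      ⟨l * P₁, l * P₂, mul_pos hl0 hP₁, h1, mul_pos hl0 hP₂, h2, rfl⟩, ?_⟩
    have hden : 0 < P₁ + K * P₂ := by positivity
    have key : l * C (P₁, P₂) ≤ C (l * P₁, l * P₂) := hC_ts l P₁ P₂ hl0 hl1 hP₁ hP₂
    have hden2 : l * P₁ + K * (l * P₂) = l * (P₁ + K * P₂) := by ring
    rw [hden2]
    rw [div_le_div_iff₀ hden (by positivity)]
    calc C (P₁, P₂) * (l * (P₁ + K * P₂)) = (l * C (P₁, P₂)) * (P₁ + K * P₂) := by ring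
      _ ≤ C (l * P₁, l * P₂) * (P₁ + K * P₂) :=
        mul_le_mul_of_nonneg_right key hden.le
  · rintro r ⟨P₁, P₂, hP₁, _, hP₂, _, rfl⟩
    exact ⟨_, ⟨P₁, P₂, hP₁, hP₂, rfl⟩, le_refl _⟩
end

section
/- Let K ≥ 1 be an integer and let g, h > 0 be reals. For all reals P₁, P₂ > 0 satisfying P₂·h < P₁·g < K²·P₂·h, one has log₂(1 + 2K·√(P₁·P₂·g·h)) / (P₁ + K·P₂) ≤ (2/ln 2) · min{ K·g, √(K·g·h), K·h }. -/
/-- Rate per unit energy bound in the intermediate low-SNR regime (iv). -/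
theorem regime_iv_rate_per_unit_energy_bound
    (K : ℕ) (hK : 1 ≤ K) (g h : ℝ) (hg : 0 < g) (hh : 0 < h)
    (P₁ P₂ : ℝ) (hP₁ : 0 < P₁) (hP₂ : 0 < P₂)
    (h₁ : P₂ * h < P₁ * g) (h₂ : P₁ * g < (K : ℝ) ^ 2 * P₂ * h) :
    Real.logb 2 (1 + 2 * (K : ℝ) * Real.sqrt (P₁ * P₂ * g * h)) / (P₁ + (K : ℝ) * P₂) ≤
      (2 / Real.log 2) *
        min ((K : ℝ) * g) (min (Real.sqrt ((K : ℝ) * g * h)) ((K : ℝ) * h)) := by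
  have hK0 : (1 : ℝ) ≤ (K : ℝ) := by exact_mod_cast hK
  have hKpos : (0 : ℝ) < (K : ℝ) := by linarith
  set S := Real.sqrt (P₁ * P₂ * g * h) with hSdef
  have hSnn : 0 ≤ S := Real.sqrt_nonneg _
  have hSsq : S ^ 2 = P₁ * P₂ * g * h := Real.sq_sqrt (by positivity)
  have hD : (0 : ℝ) < P₁ + (K : ℝ) * P₂ := by positivity
  have hlog2 : (0 : ℝ) < Real.log 2 := Real.log_pos one_lt_two
  set T := Real.sqrt ((K : ℝ) * g * h) with hTdef
  have hTnn : 0 ≤ T := Real.sqrt_nonneg _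
  have hTsq : T ^ 2 = (K : ℝ) * g * h := Real.sq_sqrt (by positivity)
  -- bound S by P₁ * g
  have hSA : S ≤ P₁ * g := by
    have h' : P₁ * P₂ * g * h ≤ (P₁ * g) ^ 2 := by nlinarith [mul_lt_mul_of_pos_left h₁ (mul_pos hP₁ hg)]
    calc S ≤ Real.sqrt ((P₁ * g) ^ 2) := Real.sqrt_le_sqrt h'
    _ = P₁ * g := Real.sqrt_sq (by positivity)
  -- bound S by K * P₂ * h
  have hSC : S ≤ (K : ℝ) * P₂ * h := by
    have h' : P₁ * P₂ * g * h ≤ ((K : ℝ) * P₂ * h) ^ 2 := by nlinarith [mul_lt_mul_of_pos_right h₂ (mul_pos hP₂ hh)]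
    calc S ≤ Real.sqrt (((K : ℝ) * P₂ * h) ^ 2) := Real.sqrt_le_sqrt h'
    _ = (K : ℝ) * P₂ * h := Real.sqrt_sq (by positivity)
  -- bound K * S by (P₁ + K P₂) * T
  have hSB : (K : ℝ) * S ≤ (P₁ + (K : ℝ) * P₂) * T := by
    have hsq : ((K : ℝ) * S) ^ 2 ≤ ((P₁ + (K : ℝ) * P₂) * T) ^ 2 := by
      have key : (K : ℝ) * (P₁ * P₂) ≤ (P₁ + (K : ℝ) * P₂) ^ 2 := by nlinarith [sq_nonneg (P₁ - (K : ℝ) * P₂), mul_pos hP₁ hP₂]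
      calc ((K : ℝ) * S) ^ 2 = (K : ℝ) * (P₁ * P₂) * ((K : ℝ) * g * h) := by
            rw [mul_pow, hSsq]; ring
      _ ≤ (P₁ + (K : ℝ) * P₂) ^ 2 * ((K : ℝ) * g * h) := by
            apply mul_le_mul_of_nonneg_right key (by positivity)
      _ = ((P₁ + (K : ℝ) * P₂) * T) ^ 2 := by rw [mul_pow, hTsq]
    have h1 := Real.sqrt_le_sqrt hsq
    rwa [Real.sqrt_sq (by positivity), Real.sqrt_sq (by positivity)] at h1
  -- the min bound
  have hmin : (K : ℝ) * S / (P₁ + (K : ℝ) * P₂) ≤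
      min ((K : ℝ) * g) (min T ((K : ℝ) * h)) := by
    refine le_min ?_ (le_min ?_ ?_)
    · rw [div_le_iff₀ hD]; nlinarith [mul_le_mul_of_nonneg_left hSA hKpos.le]
    · rw [div_le_iff₀ hD]; linarith [hSB]
    · rw [div_le_iff₀ hD]; nlinarith [mul_le_mul_of_nonneg_left hSC hKpos.le]
  -- log bound
  have hlogb : Real.logb 2 (1 + 2 * (K : ℝ) * S) ≤ 2 * (K : ℝ) * S / Real.log 2 := by
    have hpos : (0 : ℝ) < 1 + 2 * (K : ℝ) * S := by positivity
    have hle : Real.log (1 + 2 * (K : ℝ) * S) ≤ 2 * (K : ℝ) * S := by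
      have := Real.log_le_sub_one_of_pos hpos
      linarith
    rw [Real.logb]
    exact div_le_div_of_nonneg_right hle hlog2.le |>.trans_eq rfl
  calc Real.logb 2 (1 + 2 * (K : ℝ) * S) / (P₁ + (K : ℝ) * P₂)
      ≤ (2 * (K : ℝ) * S / Real.log 2) / (P₁ + (K : ℝ) * P₂) := by
        apply div_le_div_of_nonneg_right hlogb hD.le
    _ = (2 / Real.log 2) * ((K : ℝ) * S / (P₁ + (K : ℝ) * P₂)) := by
        field_simp
    _ ≤ (2 / Real.log 2) * min ((K : ℝ) * g) (min T ((K : ℝ) * h)) := by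
        apply mul_le_mul_of_nonneg_left hmin (by positivity)
end

section
/- Let K ≥ 1 be an integer and let g, h > 0 be reals. For all reals P₁, P₂ > 0 satisfying P₁·g ≤ P₂·h, one has (1/2)·log₂(1 + K·P₁·g) / (P₁ + K·P₂) ≤ (2/ln 2) · min{ K·g, √(K·g·h), K·h }. -/
/-- Auxiliary: if `x ≤ 4 D m` then the logarithmic rate bound holds. -/
lemma aux_rate_bound (x D m : ℝ) (hx : 0 < x) (hD : 0 < D) (hm : 0 ≤ m)
    (hkey : x ≤ 4 * D * m) :
    (1 / 2) * Real.logb 2 (1 + x) / D ≤ (2 / Real.log 2) * m := by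
  have hlog2 : 0 < Real.log 2 := Real.log_pos (by norm_num)
  have hlog : Real.log (1 + x) ≤ x := by
    have := Real.log_le_sub_one_of_pos (show 0 < 1 + x by linarith)
    linarith
  have h1 : Real.logb 2 (1 + x) ≤ x / Real.log 2 := by
    rw [Real.logb]
    exact div_le_div_of_nonneg_right hlog hlog2.le
  calc (1 / 2) * Real.logb 2 (1 + x) / D
      ≤ (1 / 2) * (x / Real.log 2) / D := by gcongr
    _ = x / (2 * Real.log 2 * D) := by
        field_simp
    _ ≤ (4 * D * m) / (2 * Real.log 2 * D) := by gcongr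
    _ = (2 / Real.log 2) * m := by
        field_simp
        ring

/-- Rate per unit energy bound in the low-SNR regime (ii) (broadcast cut binding). -/
theorem regime_ii_rate_per_unit_energy_bound
    (K : ℕ) (hK : 1 ≤ K) (g h : ℝ) (hg : 0 < g) (hh : 0 < h)
    (P₁ P₂ : ℝ) (hP₁ : 0 < P₁) (hP₂ : 0 < P₂)
    (hreg : P₁ * g ≤ P₂ * h) :
    (1 / 2) * Real.logb 2 (1 + (K : ℝ) * P₁ * g) / (P₁ + (K : ℝ) * P₂) ≤
      (2 / Real.log 2) *
        min ((K : ℝ) * g) (min (Real.sqrt ((K : ℝ) * g * h)) ((K : ℝ) * h)) := by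
  have hK' : (1 : ℝ) ≤ K := by exact_mod_cast hK
  have hKpos : (0 : ℝ) < K := by linarith
  have hD : 0 < P₁ + (K : ℝ) * P₂ := by positivity
  have hx : 0 < (K : ℝ) * P₁ * g := by positivity
  have hs : 0 ≤ Real.sqrt ((K : ℝ) * g * h) := Real.sqrt_nonneg _
  rcases le_total ((K : ℝ) * g) (min (Real.sqrt ((K : ℝ) * g * h)) ((K : ℝ) * h)) with hmin | hmin
  · rw [min_eq_left hmin]
    refine aux_rate_bound _ _ _ hx hD (by positivity) ?_
    nlinarith [mul_pos (mul_pos hKpos hg) hP₁, mul_pos (mul_pos hKpos hg) (mul_pos hKpos hP₂)]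
  · rw [min_eq_right hmin]
    rcases le_total (Real.sqrt ((K : ℝ) * g * h)) ((K : ℝ) * h) with hmin2 | hmin2
    · rw [min_eq_left hmin2]
      refine aux_rate_bound _ _ _ hx hD hs ?_
      -- key: K P₁ g ≤ 4 (P₁ + K P₂) √(K g h)
      have h4D : 0 < 4 * (P₁ + (K : ℝ) * P₂) := by positivity
      rw [mul_comm (4 * (P₁ + (K : ℝ) * P₂)) (Real.sqrt ((K : ℝ) * g * h)),
        ← div_le_iff₀ h4D, Real.le_sqrt (by positivity) (by positivity), div_pow,
        div_le_iff₀ (by positivity)]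
      have key1 : 4 * ((K : ℝ) * P₁ * P₂) ≤ (P₁ + (K : ℝ) * P₂) ^ 2 := by
        nlinarith [sq_nonneg (P₁ - (K : ℝ) * P₂)]
      have key2 : ((K : ℝ) * P₁ * g) ^ 2 ≤ (K : ℝ) * ((K : ℝ) * P₁ * P₂) * (g * h) := by
        have := mul_le_mul_of_nonneg_left hreg (by positivity : (0:ℝ) ≤ (K:ℝ)^2 * P₁ * g)
        nlinarith
      calc ((K : ℝ) * P₁ * g) ^ 2 ≤ (K : ℝ) * ((K : ℝ) * P₁ * P₂) * (g * h) := key2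
        _ ≤ (K : ℝ) * g * h * ((4 * (P₁ + (K : ℝ) * P₂)) ^ 2) := by
            nlinarith [mul_pos (mul_pos hKpos hg) hh, key1, sq_nonneg (P₁ + (K:ℝ)*P₂)]
    · rw [min_eq_right hmin2]
      refine aux_rate_bound _ _ _ hx hD (by positivity) ?_
      nlinarith [mul_le_mul_of_nonneg_left hreg hKpos.le, mul_pos hP₁ hh,
        mul_pos (mul_pos hKpos hP₂) hh,
        mul_nonneg (mul_nonneg (sub_nonneg.2 hK') (mul_pos hKpos hP₂).le) hh.le,
        mul_pos (mul_pos hKpos hP₁) hh]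
end

section
/- Let K ≥ 1 be an integer and let g, h > 0 be reals. Then the supremum over all P₁, P₂ > 0 with P₁·g ≤ P₂·h of (1/2)·log₂(1 + K·P₁·g)/(P₁ + K·P₂) equals (1/(2·ln 2)) · K·g/(1 + K·g/h). The supremum is approached by setting P₂ = P₁·g/h and letting P₁ → 0, and is not exceeded since ln(1+x) ≤ x. -/
/-- The supremum of the regime-(ii) rate per unit energy over all admissible
powers equals (1/(2 ln 2)) · Kg/(1 + Kg/h). -/
theorem regime_ii_rate_per_unit_energy_sup
    (K : ℕ) (hK : 1 ≤ K) (g h : ℝ) (hg : 0 < g) (hh : 0 < h) :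
    sSup {r : ℝ | ∃ P₁ P₂ : ℝ, 0 < P₁ ∧ 0 < P₂ ∧ P₁ * g ≤ P₂ * h ∧
        r = (1 / 2) * Real.logb 2 (1 + (K : ℝ) * P₁ * g) / (P₁ + (K : ℝ) * P₂)} =
      (1 / (2 * Real.log 2)) * ((K : ℝ) * g / (1 + (K : ℝ) * g / h)) := by
  have hlog2 : 0 < Real.log 2 := Real.log_pos one_lt_two
  have hK0 : (0 : ℝ) < (K : ℝ) := by exact_mod_cast Nat.lt_of_lt_of_le Nat.zero_lt_one hK
  set c : ℝ := (K : ℝ) * g with hc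
  have hc0 : 0 < c := mul_pos hK0 hg
  set d : ℝ := 1 + (K : ℝ) * g / h with hd
  have hd0 : 0 < d := by
    have : 0 < (K : ℝ) * g / h := div_pos hc0 hh
    rw [hd]; linarith
  set L : ℝ := c / (2 * Real.log 2 * d) with hL
  have hLtarget : (1 / (2 * Real.log 2)) * ((K : ℝ) * g / (1 + (K : ℝ) * g / h)) = L := by
    rw [hL, ← hd, ← hc]; field_simp
  rw [hLtarget]
  apply csSup_eq_of_forall_le_of_forall_lt_exists_gt
  · -- nonempty
    exact ⟨_, 1, g / h, one_pos, div_pos hg hh,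
      by rw [one_mul, div_mul_cancel₀ _ (ne_of_gt hh)], rfl⟩
  · -- upper bound
    rintro r ⟨P₁, P₂, hP1, hP2, hle, rfl⟩
    have hX : (0 : ℝ) < 1 + (K : ℝ) * P₁ * g := by
      have : 0 < (K : ℝ) * P₁ * g := by positivity
      linarith
    have hnum : Real.log (1 + (K : ℝ) * P₁ * g) ≤ c * P₁ := by
      have := Real.log_le_sub_one_of_pos hX
      rw [hc]; nlinarith
    have hP2' : P₁ * g / h ≤ P₂ := by
      rw [div_le_iff₀ hh]; linarith
    have hden : P₁ * d ≤ P₁ + (K : ℝ) * P₂ := by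
      have h1 : (K : ℝ) * (P₁ * g / h) ≤ (K : ℝ) * P₂ :=
        mul_le_mul_of_nonneg_left hP2' (le_of_lt hK0)
      have h2 : P₁ * d = P₁ + (K : ℝ) * (P₁ * g / h) := by
        rw [hd]; field_simp
      rw [h2]; linarith
    have hdenpos : 0 < P₁ * d := mul_pos hP1 hd0
    have hA : (1 / 2) * Real.logb 2 (1 + (K : ℝ) * P₁ * g)
        ≤ (1 / 2) * (c * P₁ / Real.log 2) := by
      rw [Real.logb]
      gcongr
    calc (1 / 2) * Real.logb 2 (1 + (K : ℝ) * P₁ * g) / (P₁ + (K : ℝ) * P₂)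
        ≤ (1 / 2) * (c * P₁ / Real.log 2) / (P₁ * d) := by
          apply div_le_div₀ (by positivity) hA hdenpos hden
      _ = L := by rw [hL]; field_simp
  · -- approach the supremum
    intro w hw
    have hderiv : HasDerivAt (fun x : ℝ => Real.log (1 + c * x)) c 0 := by
      have h1 : HasDerivAt (fun x : ℝ => 1 + c * x) c 0 := by
        simpa using ((hasDerivAt_id (0 : ℝ)).const_mul c).const_add 1
      have h2 := h1.log (by norm_num)
      simpa using h2
    have hslope : Filter.Tendsto (fun x : ℝ => Real.log (1 + c * x) / x)
        (nhdsWithin 0 (Set.Ioi 0)) (nhds c) := by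
      have h3 := hasDerivAt_iff_tendsto_slope.mp hderiv
      have h4 := h3.mono_left (nhdsWithin_mono 0 (by
        intro x hx
        exact ne_of_gt hx : Set.Ioi (0 : ℝ) ⊆ {(0 : ℝ)}ᶜ))
      refine h4.congr fun x => ?_
      simp [slope_def_field]
    have hf : Filter.Tendsto
        (fun x : ℝ => (1 / 2) * Real.logb 2 (1 + c * x) / (x * d))
        (nhdsWithin 0 (Set.Ioi 0)) (nhds L) := by
      have h3 : Filter.Tendsto
          (fun x : ℝ => (Real.log (1 + c * x) / x) * (1 / (2 * Real.log 2 * d)))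
          (nhdsWithin 0 (Set.Ioi 0)) (nhds (c * (1 / (2 * Real.log 2 * d)))) :=
        hslope.mul_const _
      have heq : c * (1 / (2 * Real.log 2 * d)) = L := by rw [hL]; ring
      rw [heq] at h3
      refine h3.congr' ?_
      filter_upwards [self_mem_nhdsWithin] with x hx
      have hx0 : x ≠ 0 := ne_of_gt hx
      have key : ∀ y : ℝ, y / x * (1 / (2 * Real.log 2 * d)) =
          1 / 2 * (y / Real.log 2) / (x * d) := by
        intro y; field_simp
      rw [Real.logb]
      exact key _
    have hev : ∀ᶠ x in nhdsWithin 0 (Set.Ioi 0),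
        w < (1 / 2) * Real.logb 2 (1 + c * x) / (x * d) :=
      hf.eventually (eventually_gt_nhds hw)
    obtain ⟨x, hwx, hx⟩ := (hev.and self_mem_nhdsWithin).exists
    refine ⟨_, ⟨x, x * g / h, hx, by positivity, ?_, rfl⟩, ?_⟩
    · rw [div_mul_cancel₀ _ (ne_of_gt hh)]
    · have harg : 1 + (K : ℝ) * x * g = 1 + c * x := by rw [hc]; ring
      have hden2 : x + (K : ℝ) * (x * g / h) = x * d := by
        rw [hd]; field_simp
      rw [harg, hden2]
      exact hwx
end

section
/- Let K ≥ 1 be an integer and let g, h > 0 be reals. For all reals P₁, P₂ > 0 satisfying P₁·g ≥ K²·P₂·h, one has (1/2)·log₂(1 + K²·P₂·h) / (P₁ + K·P₂) ≤ (2/ln 2) · min{ K·g, √(K·g·h), K·h }. -/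
/-- Rate per unit energy bound in the low-SNR regime (v) (multiple-access cut binding). -/
theorem regime_v_rate_per_unit_energy_bound
    (K : ℕ) (hK : 1 ≤ K) (g h : ℝ) (hg : 0 < g) (hh : 0 < h)
    (P₁ P₂ : ℝ) (hP₁ : 0 < P₁) (hP₂ : 0 < P₂)
    (hreg : P₁ * g ≥ (K : ℝ) ^ 2 * P₂ * h) :
    (1 / 2) * Real.logb 2 (1 + (K : ℝ) ^ 2 * P₂ * h) / (P₁ + (K : ℝ) * P₂) ≤
      (2 / Real.log 2) *
        min ((K : ℝ) * g) (min (Real.sqrt ((K : ℝ) * g * h)) ((K : ℝ) * h)) := by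
  have hK' : (1:ℝ) ≤ K := by exact_mod_cast hK
  have hKpos : (0:ℝ) < K := by linarith
  set x : ℝ := (K:ℝ)^2 * P₂ * h with hxdef
  have hxpos : 0 < x := by positivity
  have hden : 0 < P₁ + (K:ℝ)*P₂ := by positivity
  have hlog2 : 0 < Real.log 2 := Real.log_pos (by norm_num)
  have h1 : Real.log (1 + x) ≤ x := by
    have := Real.log_le_sub_one_of_pos (show (0:ℝ) < 1 + x by linarith)
    linarith
  have hmin_pos : 0 < min g ((K:ℝ)*h) := lt_min hg (by positivity)
  have hm : min g ((K:ℝ)*h) ≤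
      min ((K : ℝ) * g) (min (Real.sqrt ((K : ℝ) * g * h)) ((K : ℝ) * h)) := by
    refine le_min ((min_le_left _ _).trans (le_mul_of_one_le_left hg.le hK')) (le_min ?_ (min_le_right _ _))
    rw [Real.le_sqrt hmin_pos.le (by positivity)]
    nlinarith [min_le_left g ((K:ℝ)*h), min_le_right g ((K:ℝ)*h), hmin_pos]
  have h2 : x / (P₁ + (K:ℝ)*P₂) ≤ min g ((K:ℝ)*h) := by
    refine le_min ?_ ?_ <;> rw [div_le_iff₀ hden, hxdef]
    · nlinarith [mul_pos hg (mul_pos hKpos hP₂)]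
    · nlinarith [mul_pos (mul_pos hKpos hh) hP₁]
  have hlb : Real.logb 2 (1+x) ≤ x / Real.log 2 := by
    rw [Real.logb]
    gcongr
  calc (1 / 2) * Real.logb 2 (1 + x) / (P₁ + (K:ℝ)*P₂)
      ≤ (1 / 2) * (x / Real.log 2) / (P₁ + (K:ℝ)*P₂) := by gcongr
    _ = (1/(2*Real.log 2)) * (x / (P₁ + (K:ℝ)*P₂)) := by ring
    _ ≤ (1/(2*Real.log 2)) * min g ((K:ℝ)*h) := by gcongr
    _ ≤ (2 / Real.log 2) * min g ((K:ℝ)*h) := by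
        apply mul_le_mul_of_nonneg_right _ hmin_pos.le
        rw [div_le_div_iff₀ (by positivity) hlog2]
        nlinarith
    _ ≤ (2 / Real.log 2) * min ((K : ℝ) * g) (min (Real.sqrt ((K : ℝ) * g * h)) ((K : ℝ) * h)) := by
        gcongr
end

section
/- Let K ≥ 1 be an integer and let g, h, μ > 0 be reals with h < g/K. With the choices P₁ = 1/(μ·g) and P₂ = 1/(μ·K²·h), one has K²·μ²·g·h·P₁·P₂/(1 + μ·g·P₁ + K·μ·h·P₂) = 1/(2 + 1/K), and (1/2)·log₂(1 + 1/(2 + 1/K)) / (P₁ + K·P₂) ≥ (μ·log₂(4/3)/4) · K·h. -/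
/-- Achieved rate per unit energy in the regime h < g/K with the power choices
P₁ = 1/(μg), P₂ = 1/(μK²h). -/
theorem achievable_rate_regime_h_lt_g_div_K
    (K : ℕ) (hK : 1 ≤ K) (g h μ : ℝ) (hg : 0 < g) (hh : 0 < h) (hμ : 0 < μ)
    (hreg : h < g / (K : ℝ))
    (P₁ P₂ : ℝ) (hP₁ : P₁ = 1 / (μ * g)) (hP₂ : P₂ = 1 / (μ * (K : ℝ) ^ 2 * h)) :
    (K : ℝ) ^ 2 * μ ^ 2 * g * h * P₁ * P₂ /
        (1 + μ * g * P₁ + (K : ℝ) * μ * h * P₂) = 1 / (2 + 1 / (K : ℝ)) ∧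
    (1 / 2) * Real.logb 2 (1 + 1 / (2 + 1 / (K : ℝ))) / (P₁ + (K : ℝ) * P₂) ≥
      μ * Real.logb 2 (4 / 3) / 4 * ((K : ℝ) * h) := by
  have hK1 : (1 : ℝ) ≤ (K : ℝ) := by exact_mod_cast hK
  have hKpos : (0 : ℝ) < (K : ℝ) := by linarith
  have hKne : ((K : ℝ)) ≠ 0 := ne_of_gt hKpos
  have hgne : g ≠ 0 := ne_of_gt hg
  have hhne : h ≠ 0 := ne_of_gt hh
  have hμne : μ ≠ 0 := ne_of_gt hμ
  have hden : (0:ℝ) < 2 + 1 / (K : ℝ) := by positivity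
  constructor
  · subst hP₁ hP₂
    have h1 : μ * g * (1 / (μ * g)) = 1 := by field_simp
    have h2 : (K:ℝ) * μ * h * (1 / (μ * (K:ℝ)^2 * h)) = 1 / (K:ℝ) := by
      field_simp
    have h3 : (K:ℝ)^2 * μ^2 * g * h * (1 / (μ * g)) * (1 / (μ * (K:ℝ)^2 * h)) = 1 := by
      field_simp
    rw [h1, h2, h3]
    have e : (1:ℝ) + 1 + 1 / (K:ℝ) = 2 + 1 / (K:ℝ) := by ring
    rw [e]
  · -- bound on the log
    have hfrac : (1:ℝ)/3 ≤ 1 / (2 + 1 / (K : ℝ)) := by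
      apply one_div_le_one_div_of_le hden
      have : 1 / (K : ℝ) ≤ 1 := by
        rw [div_le_one hKpos]; exact hK1
      linarith
    have hlogle : Real.logb 2 (4/3) ≤ Real.logb 2 (1 + 1 / (2 + 1 / (K : ℝ))) := by
      exact Real.logb_le_logb_of_le one_lt_two (by norm_num) (by linarith)
    have hlogpos : 0 < Real.logb 2 (4/3) :=
      Real.logb_pos one_lt_two (by norm_num)
    -- bound on the energy
    have hKh : (K : ℝ) * h < g := by
      rw [div_eq_mul_inv] at hreg
      calc (K : ℝ) * h < (K : ℝ) * (g * (K : ℝ)⁻¹) := by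
            exact (mul_lt_mul_iff_right₀ hKpos).mpr hreg
        _ = g := by field_simp
    have hSpos : 0 < P₁ + (K : ℝ) * P₂ := by
      rw [hP₁, hP₂]; positivity
    have hSle : P₁ + (K : ℝ) * P₂ ≤ 2 / (μ * (K : ℝ) * h) := by
      rw [hP₁, hP₂]
      have e : (1:ℝ)/(μ*g) + (K:ℝ)*(1/(μ*(K:ℝ)^2*h)) = 1/(μ*g) + 1/(μ*(K:ℝ)*h) := by
        field_simp
      rw [e]
      have h1 : 1/(μ*g) ≤ 1/(μ*(K:ℝ)*h) :=
        one_div_le_one_div_of_le (by positivity) (by nlinarith)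
      have e2 : 2/(μ*(K:ℝ)*h) = 1/(μ*(K:ℝ)*h) + 1/(μ*(K:ℝ)*h) := by ring
      linarith
    have hinv : μ * (K : ℝ) * h / 2 ≤ 1 / (P₁ + (K : ℝ) * P₂) := by
      rw [div_le_div_iff₀ (by norm_num) hSpos]
      calc μ * (K:ℝ) * h * (P₁ + (K:ℝ) * P₂) ≤ μ * (K:ℝ) * h * (2 / (μ * (K:ℝ) * h)) := by
            exact mul_le_mul_of_nonneg_left hSle (by positivity)
        _ = 2 := by field_simp
        _ = 1 * 2 := by ring
    set L := Real.logb 2 (1 + 1 / (2 + 1 / (K : ℝ)))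
    have hLpos : 0 < L := lt_of_lt_of_le hlogpos hlogle
    have : μ * Real.logb 2 (4/3) / 4 * ((K : ℝ) * h)
        ≤ (1/2) * L * (μ * (K:ℝ) * h / 2) := by
      nlinarith [mul_pos (mul_pos hμ hKpos) hh]
    calc μ * Real.logb 2 (4/3) / 4 * ((K : ℝ) * h)
        ≤ (1/2) * L * (μ * (K:ℝ) * h / 2) := this
      _ ≤ (1/2) * L * (1 / (P₁ + (K:ℝ) * P₂)) := by
          exact mul_le_mul_of_nonneg_left hinv (by positivity)
      _ = (1/2) * L / (P₁ + (K:ℝ) * P₂) := by ring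
end

section
/- Let K ≥ 1 be an integer and let g, h, μ > 0 be reals with g/K ≤ h < K·g. With the choices P₁ = 1/(μ·√(K·g·h)) and P₂ = 1/(μ·√(K³·g·h)), one has P₁ + K·P₂ = 2/(μ·√(K·g·h)), K²·μ²·g·h·P₁·P₂/(1 + μ·g·P₁ + K·μ·h·P₂) = 1/(1 + √(g/(K·h)) + √(h/(K·g))) ≥ 1/3, and (1/2)·log₂(1 + 1/(1 + √(g/(K·h)) + √(h/(K·g)))) / (P₁ + K·P₂) ≥ (μ·log₂(4/3)/4) · √(K·g·h). -/
/-- Achieved rate per unit energy in the intermediate regime g/K ≤ h < Kg with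
the power choices P₁ = 1/(μ√(Kgh)), P₂ = 1/(μ√(K³gh)). -/
theorem achievable_rate_intermediate_regime
    (K : ℕ) (hK : 1 ≤ K) (g h μ : ℝ) (hg : 0 < g) (hh : 0 < h) (hμ : 0 < μ)
    (hreg₁ : g / (K : ℝ) ≤ h) (hreg₂ : h < (K : ℝ) * g)
    (P₁ P₂ : ℝ) (hP₁ : P₁ = 1 / (μ * Real.sqrt ((K : ℝ) * g * h)))
    (hP₂ : P₂ = 1 / (μ * Real.sqrt ((K : ℝ) ^ 3 * g * h))) :
    P₁ + (K : ℝ) * P₂ = 2 / (μ * Real.sqrt ((K : ℝ) * g * h)) ∧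
    (K : ℝ) ^ 2 * μ ^ 2 * g * h * P₁ * P₂ /
        (1 + μ * g * P₁ + (K : ℝ) * μ * h * P₂) =
      1 / (1 + Real.sqrt (g / ((K : ℝ) * h)) + Real.sqrt (h / ((K : ℝ) * g))) ∧
    1 / (1 + Real.sqrt (g / ((K : ℝ) * h)) + Real.sqrt (h / ((K : ℝ) * g))) ≥ 1 / 3 ∧
    (1 / 2) * Real.logb 2
        (1 + 1 / (1 + Real.sqrt (g / ((K : ℝ) * h)) + Real.sqrt (h / ((K : ℝ) * g)))) /
        (P₁ + (K : ℝ) * P₂) ≥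
      μ * Real.logb 2 (4 / 3) / 4 * Real.sqrt ((K : ℝ) * g * h) := by
  have hKpos : (0:ℝ) < (K:ℝ) := by exact_mod_cast Nat.lt_of_lt_of_le Nat.zero_lt_one hK
  set s := Real.sqrt ((K : ℝ) * g * h) with hs_def
  have hs : 0 < s := Real.sqrt_pos.2 (by positivity)
  have e1 : Real.sqrt ((K : ℝ) ^ 3 * g * h) = (K:ℝ) * s := by
    rw [show (K:ℝ)^3*g*h = (K:ℝ)^2*((K:ℝ)*g*h) by ring, Real.sqrt_mul (by positivity),
      Real.sqrt_sq hKpos.le]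
  have e2 : Real.sqrt (g / ((K : ℝ) * h)) = g / s := by
    rw [show g/((K:ℝ)*h) = g^2/((K:ℝ)*g*h) by field_simp,
      Real.sqrt_div (by positivity), Real.sqrt_sq hg.le]
  have e3 : Real.sqrt (h / ((K : ℝ) * g)) = h / s := by
    rw [show h/((K:ℝ)*g) = h^2/((K:ℝ)*g*h) by field_simp,
      Real.sqrt_div (by positivity), Real.sqrt_sq hh.le]
  subst hP₁ hP₂
  have hsum : 1 / (μ * s) + (K:ℝ) * (1 / (μ * Real.sqrt ((K : ℝ) ^ 3 * g * h)))
      = 2 / (μ * s) := by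
    rw [e1]; field_simp; ring
  have hden_pos : 0 < 1 + Real.sqrt (g / ((K : ℝ) * h)) + Real.sqrt (h / ((K : ℝ) * g)) := by
    positivity
  have hb1 : Real.sqrt (g / ((K : ℝ) * h)) ≤ 1 := by
    rw [show (1:ℝ) = Real.sqrt 1 by simp]
    apply Real.sqrt_le_sqrt
    rw [div_le_one (by positivity)]
    calc g = g / (K:ℝ) * K := by field_simp
    _ ≤ h * K := by nlinarith
    _ = (K:ℝ) * h := by ring
  have hb2 : Real.sqrt (h / ((K : ℝ) * g)) ≤ 1 := by
    rw [show (1:ℝ) = Real.sqrt 1 by simp]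
    apply Real.sqrt_le_sqrt
    rw [div_le_one (by positivity)]
    linarith
  have hthird : 1 / (1 + Real.sqrt (g / ((K : ℝ) * h)) + Real.sqrt (h / ((K : ℝ) * g)))
      ≥ 1 / 3 := by
    apply one_div_le_one_div_of_le hden_pos
    linarith
  refine ⟨hsum, ?_, hthird, ?_⟩
  · rw [e1, e2, e3]
    rw [div_eq_div_iff (by positivity) (by positivity)]
    have hs2 : s^2 = (K:ℝ)*g*h := Real.sq_sqrt (by positivity)
    field_simp
    linear_combination (-1:ℝ) * hs2
  · rw [hsum]
    have hlog : Real.logb 2 (4/3) ≤ Real.logb 2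
        (1 + 1 / (1 + Real.sqrt (g / ((K : ℝ) * h)) + Real.sqrt (h / ((K : ℝ) * g)))) := by
      exact Real.logb_le_logb_of_le one_lt_two (by norm_num) (by linarith)
    have hlog0 : 0 ≤ Real.logb 2 (4/3) := Real.logb_nonneg one_lt_two (by norm_num)
    rw [ge_iff_le, div_div_eq_mul_div]
    nlinarith [mul_le_mul_of_nonneg_right hlog (le_of_lt (mul_pos hμ hs))]
end

section
/- Let K ≥ 1 be an integer and let g, h, μ > 0 be reals with h ≥ K·g. With the choices P₁ = 1/(μ·K·g) and P₂ = 1/(μ·K·h), one has K²·μ²·g·h·P₁·P₂/(1 + μ·g·P₁ + K·μ·h·P₂) = 1/(2 + 1/K), and (1/2)·log₂(1 + 1/(2 + 1/K)) / (P₁ + K·P₂) ≥ (μ·log₂(4/3)/4) · K·g. -/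
/-- Achieved rate per unit energy in the regime h ≥ Kg with the power choices
P₁ = 1/(μKg), P₂ = 1/(μKh). -/
theorem achievable_rate_regime_h_ge_Kg
    (K : ℕ) (hK : 1 ≤ K) (g h μ : ℝ) (hg : 0 < g) (hh : 0 < h) (hμ : 0 < μ)
    (hreg : h ≥ (K : ℝ) * g)
    (P₁ P₂ : ℝ) (hP₁ : P₁ = 1 / (μ * (K : ℝ) * g)) (hP₂ : P₂ = 1 / (μ * (K : ℝ) * h)) :
    (K : ℝ) ^ 2 * μ ^ 2 * g * h * P₁ * P₂ /
        (1 + μ * g * P₁ + (K : ℝ) * μ * h * P₂) = 1 / (2 + 1 / (K : ℝ)) ∧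
    (1 / 2) * Real.logb 2 (1 + 1 / (2 + 1 / (K : ℝ))) / (P₁ + (K : ℝ) * P₂) ≥
      μ * Real.logb 2 (4 / 3) / 4 * ((K : ℝ) * g) := by
  have hKpos : (0 : ℝ) < (K : ℝ) := by exact_mod_cast Nat.pos_of_ne_zero (by omega)
  have hK1 : (1 : ℝ) ≤ (K : ℝ) := by exact_mod_cast hK
  constructor
  · subst hP₁ hP₂
    field_simp
    ring
  · have hKinv : 1 / (K : ℝ) ≤ 1 := by
      rw [div_le_one hKpos]; exact hK1
    have hKinv0 : 0 < 1 / (K : ℝ) := by positivity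
    have h2K : (0 : ℝ) < 2 + 1 / (K : ℝ) := by linarith
    have harg : (4 : ℝ) / 3 ≤ 1 + 1 / (2 + 1 / (K : ℝ)) := by
      have : (1 : ℝ) / 3 ≤ 1 / (2 + 1 / (K : ℝ)) := by
        apply one_div_le_one_div_of_le h2K
        linarith
      linarith
    have hlog : Real.logb 2 (4 / 3) ≤ Real.logb 2 (1 + 1 / (2 + 1 / (K : ℝ))) := by
      exact Real.logb_le_logb_of_le (by norm_num) (by norm_num) harg
    have hlog0 : 0 ≤ Real.logb 2 (4 / 3) :=
      Real.logb_nonneg (by norm_num) (by norm_num)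
    have hden : P₁ + (K : ℝ) * P₂ ≤ 2 / (μ * (K : ℝ) * g) := by
      rw [hP₁, hP₂]
      have h1 : (K : ℝ) * (1 / (μ * (K : ℝ) * h)) = 1 / (μ * h) := by
        field_simp
      rw [h1]
      have : 1 / (μ * h) ≤ 1 / (μ * (K : ℝ) * g) := by
        apply one_div_le_one_div_of_le (by positivity)
        calc μ * (K : ℝ) * g = μ * ((K : ℝ) * g) := by ring
          _ ≤ μ * h := by nlinarith
      have h2 : 2 / (μ * (K : ℝ) * g) = 1 / (μ * (K : ℝ) * g) + 1 / (μ * (K : ℝ) * g) := by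
        ring
      linarith [this]
    have hdenpos : 0 < P₁ + (K : ℝ) * P₂ := by
      rw [hP₁, hP₂]; positivity
    have hAD : (μ * (K : ℝ) * g) * (P₁ + (K : ℝ) * P₂) ≤ 2 := by
      have hA : (0:ℝ) < μ * (K : ℝ) * g := by positivity
      calc (μ * (K : ℝ) * g) * (P₁ + (K : ℝ) * P₂)
          ≤ (μ * (K : ℝ) * g) * (2 / (μ * (K : ℝ) * g)) := by
            exact mul_le_mul_of_nonneg_left hden hA.le
        _ = 2 := by field_simp
    rw [ge_iff_le, le_div_iff₀ hdenpos]
    nlinarith [mul_le_mul_of_nonneg_left hAD hlog0, hlog, hlog0]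
end

section
/- Let K ≥ 1 be an integer and let g, h, μ > 0 be reals. Then there exist P₁, P₂ > 0 such that (1/2)·log₂(1 + K²·μ²·g·h·P₁·P₂/(1 + μ·g·P₁ + K·μ·h·P₂)) / (P₁ + K·P₂) ≥ (μ·log₂(4/3)/4) · min{ K·g, √(K·g·h), K·h }. -/
/-- Algebraic core of the achievability result: there exist powers P₁, P₂ > 0
for which the rate per unit energy of the repetition-code relaying scheme is at
least (μ·log₂(4/3)/4)·min{Kg, √(Kgh), Kh}. -/
theorem achievable_rate_per_unit_energy
    (K : ℕ) (hK : 1 ≤ K) (g h μ : ℝ) (hg : 0 < g) (hh : 0 < h) (hμ : 0 < μ) :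
    ∃ P₁ P₂ : ℝ, 0 < P₁ ∧ 0 < P₂ ∧
      (1 / 2) * Real.logb 2
          (1 + (K : ℝ) ^ 2 * μ ^ 2 * g * h * P₁ * P₂ /
            (1 + μ * g * P₁ + (K : ℝ) * μ * h * P₂)) / (P₁ + (K : ℝ) * P₂) ≥
        μ * Real.logb 2 (4 / 3) / 4 *
          min ((K : ℝ) * g) (min (Real.sqrt ((K : ℝ) * g * h)) ((K : ℝ) * h)) := by
  have hK0 : (0:ℝ) < (K:ℝ) := by exact_mod_cast Nat.lt_of_lt_of_le Nat.zero_lt_one hK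
  set m : ℝ := min ((K:ℝ)*g) (min (Real.sqrt ((K:ℝ)*g*h)) ((K:ℝ)*h)) with hmdef
  have hs : 0 < Real.sqrt ((K:ℝ)*g*h) := Real.sqrt_pos.mpr (by positivity)
  have hm : 0 < m := lt_min (by positivity) (lt_min hs (by positivity))
  have hm1 : m ≤ (K:ℝ)*g := min_le_left _ _
  have hm2 : m ≤ Real.sqrt ((K:ℝ)*g*h) := le_trans (min_le_right _ _) (min_le_left _ _)
  have hm3 : m ≤ (K:ℝ)*h := le_trans (min_le_right _ _) (min_le_right _ _)
  have hmsq : m^2 ≤ (K:ℝ)*g*h := by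
    have h1 : Real.sqrt ((K:ℝ)*g*h) ^ 2 = (K:ℝ)*g*h :=
      Real.sq_sqrt (by positivity)
    nlinarith [hm.le, Real.sqrt_nonneg ((K:ℝ)*g*h)]
  refine ⟨1/(μ*m), 1/((K:ℝ)*μ*m), by positivity, by positivity, ?_⟩
  set P₁ : ℝ := 1/(μ*m) with hP₁
  set P₂ : ℝ := 1/((K:ℝ)*μ*m) with hP₂
  have hE : P₁ + (K:ℝ)*P₂ = 2/(μ*m) := by
    rw [hP₁, hP₂]; field_simp; ring
  have hB : (0:ℝ) < 1 + μ*g*P₁ + (K:ℝ)*μ*h*P₂ := by positivity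
  have key : m^2 + g*m + h*m ≤ 3*((K:ℝ)*g*h) := by nlinarith
  have hSNR : (1:ℝ)/3 ≤ (K:ℝ)^2*μ^2*g*h*P₁*P₂ / (1 + μ*g*P₁ + (K:ℝ)*μ*h*P₂) := by
    have hmne : m ≠ 0 := hm.ne'
    have hμne : μ ≠ 0 := hμ.ne'
    have hKne : (K:ℝ) ≠ 0 := hK0.ne'
    have e1 : (K:ℝ)^2*μ^2*g*h*P₁*P₂ = (K:ℝ)*g*h/m^2 := by
      rw [hP₁, hP₂]; field_simp
    have e2 : μ*g*P₁ = g/m := by rw [hP₁]; field_simp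
    have e3 : (K:ℝ)*μ*h*P₂ = h/m := by rw [hP₂]; field_simp
    rw [e1, e2, e3, le_div_iff₀ (by positivity), le_div_iff₀ (by positivity : (0:ℝ) < m^2)]
    have e4 : 1/3*(1+g/m+h/m)*m^2 = (m^2+g*m+h*m)/3 := by field_simp
    rw [e4]
    linarith
  set S : ℝ := (K:ℝ)^2*μ^2*g*h*P₁*P₂ / (1 + μ*g*P₁ + (K:ℝ)*μ*h*P₂) with hS
  have hlog : Real.logb 2 (4/3) ≤ Real.logb 2 (1 + S) := by
    exact Real.logb_le_logb_of_le one_lt_two (by norm_num) (by linarith)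
  rw [ge_iff_le, hE, le_div_iff₀ (by positivity : (0:ℝ) < 2/(μ*m))]
  have hrw : μ * Real.logb 2 (4/3) / 4 * m * (2/(μ*m)) = Real.logb 2 (4/3) / 2 := by
    field_simp; ring
  rw [hrw]
  linarith
end
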